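/- The Vandermonde determinant V(x) = ∏_{1≤i<j≤n} (x_j - x_i) is a harmonic function on ℝ^n: Σ_{k=1}^n ∂²V/∂x_k² = 0. -/
import Mathlib

namespace Stmt5Aux

open Finset Polynomial

variable {n : ℕ}

noncomputable def Vp (z : Fin n → ℝ) (s : Finset (Fin n)) : ℝ :=
  ∏ p ∈ (s ×ˢ s).filter (fun p => p.1 < p.2), (z p.2 - z p.1)

noncomputable def vv (z : Fin n → ℝ) (m l : Fin n) : ℝ :=
  if l < m then z m - z l else z l - z m

noncomputable def sg (m l : Fin n) : ℝ := if l < m then 1 else -1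

noncomputable def F (x : Fin n → ℝ) (k i j : Fin n) : ℝ :=
  Vp x (Finset.univ.erase k) *
    (sg k i * sg k j * ∏ l ∈ ((Finset.univ.erase k).erase i).erase j, vv x k l)

lemma F_symm (x : Fin n → ℝ) (k i j : Fin n) : F x k i j = F x k j i := by
  unfold F
  rw [Finset.erase_right_comm]
  ring

lemma peel (z : Fin n → ℝ) {s : Finset (Fin n)} {m : Fin n} (hm : m ∈ s) :
    Vp z s = (∏ l ∈ s.erase m, vv z m l) * Vp z (s.erase m) := by
  classical
  have hsplit := Finset.prod_filter_mul_prod_filter_not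
    ((s ×ˢ s).filter (fun p => p.1 < p.2)) (fun p => p.1 = m ∨ p.2 = m)
    (fun p => z p.2 - z p.1)
  have hB : (((s ×ˢ s).filter (fun p : Fin n × Fin n => p.1 < p.2)).filter
        (fun p => ¬(p.1 = m ∨ p.2 = m)))
      = ((s.erase m) ×ˢ (s.erase m)).filter (fun p => p.1 < p.2) := by
    ext p
    simp only [Finset.mem_filter, Finset.mem_product, Finset.mem_erase, not_or]
    tauto
  have hA : (∏ p ∈ ((s ×ˢ s).filter (fun p : Fin n × Fin n => p.1 < p.2)).filter
        (fun p => p.1 = m ∨ p.2 = m), (z p.2 - z p.1))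
      = ∏ l ∈ s.erase m, vv z m l := by
    refine Finset.prod_nbij' (fun p => if p.2 = m then p.1 else p.2)
      (fun l => if l < m then (l, m) else (m, l)) ?_ ?_ ?_ ?_ ?_
    · rintro ⟨p1, p2⟩ hp
      simp only [Finset.mem_filter, Finset.mem_product] at hp
      obtain ⟨⟨⟨h1, h2⟩, hlt⟩, hor⟩ := hp
      simp only [Finset.mem_erase]
      rcases hor with h | h
      · have hm2 : m < p2 := h ▸ hlt
        have hne : p2 ≠ m := ne_of_gt hm2
        rw [if_neg hne]
        exact ⟨hne, h2⟩
      · have h1m : p1 < m := h ▸ hlt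
        rw [if_pos h]
        exact ⟨ne_of_lt h1m, h1⟩
    · intro l hl
      simp only [Finset.mem_erase] at hl
      obtain ⟨hne, hls⟩ := hl
      show (if l < m then ((l, m) : Fin n × Fin n) else (m, l)) ∈ _
      by_cases h : l < m
      · rw [if_pos h]
        simp only [Finset.mem_filter, Finset.mem_product]
        exact ⟨⟨⟨hls, hm⟩, h⟩, Or.inr trivial⟩
      · have hml : m < l := lt_of_le_of_ne (not_lt.1 h) (Ne.symm hne)
        rw [if_neg h]
        simp only [Finset.mem_filter, Finset.mem_product]
        exact ⟨⟨⟨hm, hls⟩, hml⟩, Or.inl trivial⟩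
    · rintro ⟨p1, p2⟩ hp
      simp only [Finset.mem_filter, Finset.mem_product] at hp
      obtain ⟨⟨⟨h1, h2⟩, hlt⟩, hor⟩ := hp
      simp only
      rcases hor with h | h
      · have hm2 : m < p2 := h ▸ hlt
        have hne : p2 ≠ m := ne_of_gt hm2
        rw [if_neg hne, if_neg (not_lt.2 (le_of_lt hm2)), h]
      · have h1m : p1 < m := h ▸ hlt
        rw [if_pos h, if_pos h1m, h]
    · intro l hl
      simp only [Finset.mem_erase] at hl
      show (fun p : Fin n × Fin n => if p.2 = m then p.1 else p.2)
          (if l < m then ((l, m) : Fin n × Fin n) else (m, l)) = l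
      by_cases h : l < m
      · rw [if_pos h]
        simp
      · rw [if_neg h]
        simp only [if_neg hl.1]
    · rintro ⟨p1, p2⟩ hp
      simp only [Finset.mem_filter, Finset.mem_product] at hp
      obtain ⟨⟨⟨h1, h2⟩, hlt⟩, hor⟩ := hp
      simp only [vv]
      rcases hor with h | h
      · have hm2 : m < p2 := h ▸ hlt
        have hne : p2 ≠ m := ne_of_gt hm2
        rw [if_neg hne, if_neg (not_lt.2 (le_of_lt hm2)), h]
      · have h1m : p1 < m := h ▸ hlt
        rw [if_pos h, if_pos h1m, h]
  calc Vp z s = _ := (hsplit).symm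
  _ = (∏ l ∈ s.erase m, vv z m l) * Vp z (s.erase m) := by rw [hA, hB]; rfl

lemma derivative_finset_prod (t : Finset (Fin n)) (f : Fin n → Polynomial ℝ) :
    derivative (∏ l ∈ t, f l) = ∑ i ∈ t, (∏ l ∈ t.erase i, f l) * derivative (f i) := by
  classical
  induction t using Finset.induction_on with
  | empty => simp
  | @insert a s ha ih =>
      rw [Finset.prod_insert ha, derivative_mul, ih, Finset.sum_insert ha,
        Finset.erase_insert ha]
      rw [Finset.mul_sum]
      have hterm : ∀ i ∈ s, f a * ((∏ l ∈ s.erase i, f l) * derivative (f i))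
          = (∏ l ∈ (insert a s).erase i, f l) * derivative (f i) := by
        intro i hi
        have hia : i ≠ a := fun h => ha (h ▸ hi)
        rw [Finset.erase_insert_of_ne (Ne.symm hia),
          Finset.prod_insert (fun h => ha (Finset.mem_of_mem_erase h))]
        ring
      rw [Finset.sum_congr rfl hterm]
      ring

lemma polyD2 (t : Finset (Fin n)) (g b : Fin n → ℝ) (c w : ℝ) :
    iteratedDeriv 2 (fun y => c * ∏ l ∈ t, (g l * (y - b l))) w
      = c * ∑ i ∈ t, ∑ j ∈ t.erase i,
          g i * g j * ∏ l ∈ (t.erase i).erase j, (g l * (w - b l)) := by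
  classical
  set P : Polynomial ℝ := C c * ∏ l ∈ t, (C (g l) * (X - C (b l))) with hP
  have hfun : (fun y => c * ∏ l ∈ t, (g l * (y - b l))) = fun y => P.eval y := by
    funext y
    simp [hP, eval_prod]
  have hD : ∀ (Q : Polynomial ℝ), deriv (fun y => Q.eval y) = fun y => Q.derivative.eval y :=
    fun Q => funext fun y => Q.deriv
  have hd1 : ∀ l, derivative (C (g l) * (X - C (b l))) = C (g l) := by
    intro l; simp
  have h1 : derivative P
      = C c * ∑ i ∈ t, (∏ l ∈ t.erase i, (C (g l) * (X - C (b l)))) * C (g i) := by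
    rw [hP, derivative_C_mul, derivative_finset_prod]
    congr 1
    exact Finset.sum_congr rfl fun i _ => by rw [hd1]
  have h2 : derivative (derivative P)
      = C c * ∑ i ∈ t, ∑ j ∈ t.erase i,
          ((∏ l ∈ (t.erase i).erase j, (C (g l) * (X - C (b l)))) * C (g j)) * C (g i) := by
    rw [h1, derivative_C_mul, derivative_sum]
    congr 1
    apply Finset.sum_congr rfl
    intro i _
    rw [derivative_mul, derivative_C, mul_zero, add_zero, derivative_finset_prod,
      Finset.sum_mul]
    apply Finset.sum_congr rfl
    intro j _
    rw [hd1]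
  rw [hfun, show (2:ℕ) = 1 + 1 from rfl, iteratedDeriv_succ, iteratedDeriv_one, hD, hD]
  rw [h2]
  simp only [eval_mul, eval_C, eval_finset_sum, eval_prod, eval_sub, eval_X]
  congr 1
  apply Finset.sum_congr rfl; intro i _
  apply Finset.sum_congr rfl; intro j _
  ring

lemma core (x : Fin n → ℝ) {a b c : Fin n} (hab : a < b) (hbc : b < c) :
    F x a b c + F x b c a + F x c a b = 0 := by
  classical
  have hac : a < c := hab.trans hbc
  -- memberships
  have hbmem : b ∈ Finset.univ.erase a := Finset.mem_erase.2 ⟨ne_of_gt hab, Finset.mem_univ _⟩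
  have hcmem1 : c ∈ (Finset.univ.erase a).erase b :=
    Finset.mem_erase.2 ⟨ne_of_gt hbc, Finset.mem_erase.2 ⟨ne_of_gt hac, Finset.mem_univ _⟩⟩
  have hamem2 : a ∈ Finset.univ.erase b := Finset.mem_erase.2 ⟨ne_of_lt hab, Finset.mem_univ _⟩
  have hcmem2 : c ∈ (Finset.univ.erase b).erase a :=
    Finset.mem_erase.2 ⟨ne_of_gt hac, Finset.mem_erase.2 ⟨ne_of_gt hbc, Finset.mem_univ _⟩⟩
  have hamem3 : a ∈ Finset.univ.erase c := Finset.mem_erase.2 ⟨ne_of_lt hac, Finset.mem_univ _⟩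
  have hbmem3 : b ∈ (Finset.univ.erase c).erase a :=
    Finset.mem_erase.2 ⟨ne_of_gt hab, Finset.mem_erase.2 ⟨ne_of_lt hbc, Finset.mem_univ _⟩⟩
  -- set identities
  have hEb : (((Finset.univ : Finset (Fin n)).erase b).erase a).erase c
      = ((Finset.univ.erase a).erase b).erase c := by
    ext l; simp only [Finset.mem_erase, Finset.mem_univ, and_true]; tauto
  have hEbca : (((Finset.univ : Finset (Fin n)).erase b).erase c).erase a
      = ((Finset.univ.erase a).erase b).erase c := by
    ext l; simp only [Finset.mem_erase, Finset.mem_univ, and_true]; tauto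
  have hEc : (((Finset.univ : Finset (Fin n)).erase c).erase a).erase b
      = ((Finset.univ.erase a).erase b).erase c := by
    ext l; simp only [Finset.mem_erase, Finset.mem_univ, and_true]; tauto
  -- values
  have hvbc : vv x b c = x c - x b := if_neg (not_lt.2 hbc.le)
  have hvac : vv x a c = x c - x a := if_neg (not_lt.2 hac.le)
  have hvab : vv x a b = x b - x a := if_neg (not_lt.2 hab.le)
  have hsab : sg a b = -1 := if_neg (not_lt.2 hab.le)
  have hsac : sg a c = -1 := if_neg (not_lt.2 hac.le)
  have hsbc : sg b c = -1 := if_neg (not_lt.2 hbc.le)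
  have hsba : sg b a = 1 := if_pos hab
  have hsca : sg c a = 1 := if_pos hac
  have hscb : sg c b = 1 := if_pos hbc
  -- Vandermonde factors
  have hVa : Vp x (Finset.univ.erase a)
      = (x c - x b) * (∏ l ∈ ((Finset.univ.erase a).erase b).erase c, vv x b l) *
        ((∏ l ∈ ((Finset.univ.erase a).erase b).erase c, vv x c l) *
          Vp x (((Finset.univ.erase a).erase b).erase c)) := by
    rw [peel x hbmem, peel x hcmem1, ← Finset.mul_prod_erase _ _ hcmem1, hvbc]
  have hVb : Vp x (Finset.univ.erase b)
      = (x c - x a) * (∏ l ∈ ((Finset.univ.erase a).erase b).erase c, vv x a l) *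
        ((∏ l ∈ ((Finset.univ.erase a).erase b).erase c, vv x c l) *
          Vp x (((Finset.univ.erase a).erase b).erase c)) := by
    rw [peel x hamem2, peel x hcmem2, ← Finset.mul_prod_erase _ _ hcmem2, hvac, hEb]
  have hVc : Vp x (Finset.univ.erase c)
      = (x b - x a) * (∏ l ∈ ((Finset.univ.erase a).erase b).erase c, vv x a l) *
        ((∏ l ∈ ((Finset.univ.erase a).erase b).erase c, vv x b l) *
          Vp x (((Finset.univ.erase a).erase b).erase c)) := by
    rw [peel x hamem3, peel x hbmem3, ← Finset.mul_prod_erase _ _ hbmem3, hvab, hEc]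
  unfold F
  rw [hEbca, hEc, hVa, hVb, hVc, hsab, hsac, hsbc, hsba, hsca, hscb]
  ring

lemma key (x : Fin n → ℝ) {k i j : Fin n} (hki : k ≠ i) (hkj : k ≠ j) (hij : i ≠ j) :
    F x k i j + F x i j k + F x j k i = 0 := by
  rcases hki.lt_or_gt with h1 | h1
  · rcases hij.lt_or_gt with h3 | h3
    · exact core x h1 h3
    · rcases hkj.lt_or_gt with h2 | h2
      · linarith [core x h2 h3, F_symm x k i j, F_symm x i j k, F_symm x j k i]
      · linarith [core x h2 h1]
  · rcases hkj.lt_or_gt with h2 | h2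
    · linarith [core x h1 h2, F_symm x k i j, F_symm x i j k, F_symm x j k i]
    · rcases hij.lt_or_gt with h3 | h3
      · linarith [core x h3 h2]
      · linarith [core x h3 h1, F_symm x k i j, F_symm x i j k, F_symm x j k i]

lemma update_eq (x : Fin n → ℝ) (k : Fin n) (y : ℝ) :
    Vp (Function.update x k y) Finset.univ
      = Vp x (Finset.univ.erase k) * ∏ l ∈ Finset.univ.erase k, (sg k l * (y - x l)) := by
  classical
  rw [peel (Function.update x k y) (Finset.mem_univ k)]
  have h1 : Vp (Function.update x k y) (Finset.univ.erase k) = Vp x (Finset.univ.erase k) := by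
    unfold Vp
    apply Finset.prod_congr rfl
    intro p hp
    simp only [Finset.mem_filter, Finset.mem_product, Finset.mem_erase] at hp
    rw [Function.update_of_ne hp.1.1.1, Function.update_of_ne hp.1.2.1]
  have h2 : ∀ l ∈ Finset.univ.erase k,
      vv (Function.update x k y) k l = sg k l * (y - x l) := by
    intro l hl
    have hlk : l ≠ k := (Finset.mem_erase.1 hl).1
    unfold vv sg
    rw [Function.update_self, Function.update_of_ne hlk]
    by_cases h : l < k
    · rw [if_pos h, if_pos h]; ring
    · rw [if_neg h, if_neg h]; ring
  rw [h1, Finset.prod_congr rfl h2, mul_comm]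

lemma second_deriv (x : Fin n → ℝ) (k : Fin n) :
    iteratedDeriv 2 (fun y => Vp (Function.update x k y) Finset.univ) (x k)
      = ∑ i ∈ Finset.univ.erase k, ∑ j ∈ (Finset.univ.erase k).erase i, F x k i j := by
  classical
  have hfun : (fun y => Vp (Function.update x k y) Finset.univ)
      = (fun y => Vp x (Finset.univ.erase k) *
          ∏ l ∈ Finset.univ.erase k, (sg k l * (y - x l))) :=
    funext fun y => update_eq x k y
  rw [hfun, polyD2]
  rw [Finset.mul_sum]
  apply Finset.sum_congr rfl
  intro i hi
  rw [Finset.mul_sum]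
  apply Finset.sum_congr rfl
  intro j hj
  have hprod : ∏ l ∈ ((Finset.univ.erase k).erase i).erase j, (sg k l * (x k - x l))
      = ∏ l ∈ ((Finset.univ.erase k).erase i).erase j, vv x k l := by
    apply Finset.prod_congr rfl
    intro l hl
    have hlk : l ≠ k :=
      (Finset.mem_erase.1 (Finset.mem_of_mem_erase (Finset.mem_of_mem_erase hl))).1
    unfold sg vv
    by_cases h : l < k
    · rw [if_pos h, if_pos h]; ring
    · rw [if_neg h, if_neg h]; ring
  rw [hprod]
  unfold F
  ring

end Stmt5Aux

/-- the Vandermonde determinant `V(x) = ∏_{i<j} (x_j - x_i)` is harmonic on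
`ℝⁿ`: `Σ_k ∂²V/∂x_k² = 0`. -/
theorem stmt_5 (n : ℕ) (V : (Fin n → ℝ) → ℝ)
    (hV : ∀ x, V x = ∏ p ∈ Finset.univ.filter (fun p : Fin n × Fin n => p.1 < p.2),
      (x p.2 - x p.1))
    (x : Fin n → ℝ) :
    ∑ k : Fin n, iteratedDeriv 2 (fun y => V (Function.update x k y)) (x k) = 0 := by
  classical
  open Stmt5Aux in
  have hVp : ∀ z : Fin n → ℝ, V z = Vp z Finset.univ := by
    intro z
    rw [hV]
    unfold Vp
    rw [Finset.univ_product_univ]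
  have hstep : ∑ k : Fin n, iteratedDeriv 2 (fun y => V (Function.update x k y)) (x k)
      = ∑ k : Fin n, ∑ i ∈ Finset.univ.erase k, ∑ j ∈ (Finset.univ.erase k).erase i,
          F x k i j := by
    apply Finset.sum_congr rfl
    intro k _
    have he : (fun y => V (Function.update x k y))
        = fun y => Vp (Function.update x k y) Finset.univ := funext fun y => hVp _
    rw [he, second_deriv]
  rw [hstep]
  set S : Finset (Fin n × Fin n × Fin n) :=
    Finset.univ.filter (fun t => t.1 ≠ t.2.1 ∧ t.1 ≠ t.2.2 ∧ t.2.1 ≠ t.2.2) with hS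
  have hconv : ∀ H : Fin n → Fin n → Fin n → ℝ,
      (∑ k : Fin n, ∑ i ∈ Finset.univ.erase k, ∑ j ∈ (Finset.univ.erase k).erase i, H k i j)
        = ∑ t ∈ S, H t.1 t.2.1 t.2.2 := by
    intro H
    rw [hS, Finset.sum_filter, Fintype.sum_prod_type]
    apply Finset.sum_congr rfl
    intro k _
    rw [Fintype.sum_prod_type]
    have houter : Finset.univ.erase k = Finset.univ.filter (fun i : Fin n => k ≠ i) := by
      ext i
      simp [eq_comm, ne_comm]
    rw [houter, Finset.sum_filter]
    apply Finset.sum_congr rfl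
    intro i _
    by_cases h1 : k ≠ i
    · rw [if_pos h1]
      have hinner : (Finset.univ.filter (fun m : Fin n => k ≠ m)).erase i
          = Finset.univ.filter (fun j : Fin n => k ≠ j ∧ i ≠ j) := by
        ext j
        simp only [Finset.mem_erase, Finset.mem_filter, Finset.mem_univ, true_and]
        tauto
      rw [hinner, Finset.sum_filter]
      apply Finset.sum_congr rfl
      intro j _
      by_cases h2 : k ≠ j <;> by_cases h3 : i ≠ j <;> simp [h1, h2, h3]
    · rw [if_neg h1]
      symm
      apply Finset.sum_eq_zero
      intro j _
      rw [if_neg (by tauto)]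
  have hcyc : ∀ H : Fin n → Fin n → Fin n → ℝ,
      (∑ t ∈ S, H t.1 t.2.1 t.2.2) = ∑ t ∈ S, H t.2.1 t.2.2 t.1 := by
    intro H
    apply Finset.sum_nbij' (fun t : Fin n × Fin n × Fin n => (t.2.2, t.1, t.2.1))
      (fun t : Fin n × Fin n × Fin n => (t.2.1, t.2.2, t.1))
    · intro t ht
      rw [hS] at ht ⊢
      simp only [Finset.mem_filter, Finset.mem_univ, true_and] at ht ⊢
      tauto
    · intro t ht
      rw [hS] at ht ⊢
      simp only [Finset.mem_filter, Finset.mem_univ, true_and] at ht ⊢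
      tauto
    · intro t _; rfl
    · intro t _; rfl
    · intro t _; rfl
  rw [hconv (fun k i j => F x k i j)]
  have e1 : (∑ t ∈ S, F x t.1 t.2.1 t.2.2) = ∑ t ∈ S, F x t.2.1 t.2.2 t.1 :=
    hcyc (fun k i j => F x k i j)
  have e2 : (∑ t ∈ S, F x t.2.1 t.2.2 t.1) = ∑ t ∈ S, F x t.2.2 t.1 t.2.1 :=
    hcyc (fun k i j => F x i j k)
  have e3 : (∑ t ∈ S, (F x t.1 t.2.1 t.2.2 + F x t.2.1 t.2.2 t.1 + F x t.2.2 t.1 t.2.1)) = 0 := by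
    apply Finset.sum_eq_zero
    intro t ht
    rw [hS] at ht
    simp only [Finset.mem_filter, Finset.mem_univ, true_and] at ht
    exact key x ht.1 ht.2.1 ht.2.2
  rw [Finset.sum_add_distrib, Finset.sum_add_distrib] at e3
  linarith
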